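/- Let φ_t be a continuous flow on a compact metric space X, μ a φ_t-invariant Borel probability measure, and S ⊂ X a closed set. Define T_S(x) = inf{t > 0 : φ_t(x) ∈ S} (with inf ∅ = +∞). Then the restriction of μ to S gives zero mass to the set {x ∈ S : T_S(x) > 0}; that is, μ({x ∈ S : T_S(x) > 0}) = 0. -/

import Mathlib

open MeasureTheory Set Filter Topology

/-- The first positive hitting time of the set `S` under the flow `φ`,
`T_S(x) = inf {t > 0 : φ_t(x) ∈ S}`, with `inf ∅ = +∞` (valued in `ℝ≥0∞`). -/
noncomputable def firstReturnTime {X : Type*} [TopologicalSpace X]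
    (φ : Flow ℝ X) (S : Set X) (x : X) : ENNReal :=
  sInf (ENNReal.ofReal '' {t : ℝ | 0 < t ∧ φ.toFun t x ∈ S})

/-- The set of points of `S` that do not return to `S` within time `(0, δ]`. -/
def noReturnSet {X : Type*} [TopologicalSpace X] (φ : Flow ℝ X) (S : Set X) (δ : ℝ) : Set X :=
  {x | x ∈ S ∧ ∀ t : ℝ, 0 < t → t ≤ δ → φ.toFun t x ∉ S}

lemma noReturnSet_measurable {X : Type*} [MetricSpace X] [CompactSpace X]
    [MeasurableSpace X] [BorelSpace X]
    (φ : Flow ℝ X) (S : Set X) (hS : IsClosed S) (δ : ℝ) :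
    MeasurableSet (noReturnSet φ S δ) := by
  have hcont : Continuous fun p : ℝ × X => φ.toFun p.1 p.2 :=
    φ.continuous continuous_fst continuous_snd
  have key : noReturnSet φ S δ = S ∩
      (⋃ n : ℕ, Prod.snd '' ((Set.Icc (((n : ℝ) + 1)⁻¹) δ ×ˢ (Set.univ : Set X)) ∩
        (fun p : ℝ × X => φ.toFun p.1 p.2) ⁻¹' S))ᶜ := by
    ext x
    constructor
    · rintro ⟨hxS, hx⟩
      refine ⟨hxS, ?_⟩
      intro hmem
      simp only [Set.mem_iUnion, Set.mem_image] at hmem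
      obtain ⟨n, ⟨t, y⟩, ⟨⟨ht1, ht2⟩, hty⟩, hyx⟩ := hmem
      subst hyx
      have hpos : (0 : ℝ) < ((n : ℝ) + 1)⁻¹ := by positivity
      exact hx t (lt_of_lt_of_le hpos ht1.1) ht1.2 hty
    · rintro ⟨hxS, hx⟩
      refine ⟨hxS, ?_⟩
      intro t ht htδ hts
      apply hx
      obtain ⟨n, hn⟩ := exists_nat_gt t⁻¹
      have hn' : ((n : ℝ) + 1)⁻¹ ≤ t := by
        rw [inv_le_comm₀ (by positivity) ht]
        exact le_of_lt (lt_of_lt_of_le hn (by linarith))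
      simp only [Set.mem_iUnion, Set.mem_image]
      exact ⟨n, (t, x), ⟨⟨⟨hn', htδ⟩, Set.mem_univ x⟩, hts⟩, rfl⟩
  rw [key]
  refine hS.measurableSet.inter (MeasurableSet.compl (MeasurableSet.iUnion fun n => ?_))
  have hKclosed : IsClosed ((Set.Icc (((n : ℝ) + 1)⁻¹) δ ×ˢ (Set.univ : Set X)) ∩
      (fun p : ℝ × X => φ.toFun p.1 p.2) ⁻¹' S) :=
    (isClosed_Icc.prod isClosed_univ).inter (hS.preimage hcont)
  have hKcompact : IsCompact ((Set.Icc (((n : ℝ) + 1)⁻¹) δ ×ˢ (Set.univ : Set X)) ∩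
      (fun p : ℝ × X => φ.toFun p.1 p.2) ⁻¹' S) :=
    (isCompact_Icc.prod isCompact_univ).of_isClosed_subset hKclosed Set.inter_subset_left
  exact (hKcompact.image continuous_snd).isClosed.measurableSet

lemma noReturnSet_null {X : Type*} [MetricSpace X] [CompactSpace X]
    [MeasurableSpace X] [BorelSpace X]
    (φ : Flow ℝ X) (μ : Measure X) [IsProbabilityMeasure μ]
    (hinv : ∀ t : ℝ, μ.map (φ.toFun t) = μ)
    (S : Set X) (hS : IsClosed S) {δ : ℝ} (hδ : 0 < δ) :
    μ (noReturnSet φ S δ) = 0 := by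
  set A := noReturnSet φ S δ with hA_def
  have hA : MeasurableSet A := noReturnSet_measurable φ S hS δ
  have hcont : Continuous fun p : ℝ × X => φ.toFun p.1 p.2 :=
    φ.continuous continuous_fst continuous_snd
  set B := (fun p : ℝ × X => φ.toFun p.1 p.2) ⁻¹' A with hB_def
  have hB : MeasurableSet B := hA.preimage hcont.measurable
  -- hits of A along an orbit are δ-separated in time
  have hsep : ∀ x : X, ∀ s t : ℝ, φ.toFun s x ∈ A → φ.toFun t x ∈ A → s < t → δ < t - s := by
    intro x s t hs ht hst
    by_contra h
    push_neg at h
    apply hs.2 (t - s) (by linarith) h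
    have : φ.toFun (t - s) (φ.toFun s x) = φ.toFun t x := by
      rw [← φ.map_add']
      ring_nf
    rw [this]
    exact ht.1
  -- hence each slice is countable
  have hslice : ∀ x : X, Set.Countable {t : ℝ | φ.toFun t x ∈ A} := by
    intro x
    have hinj : Set.InjOn (fun t : ℝ => ⌊t / δ⌋) {t : ℝ | φ.toFun t x ∈ A} := by
      intro s hs t ht hst
      by_contra hne
      rcases lt_or_gt_of_ne hne with h | h
      · have hgap := hsep x s t hs ht h
        have h1 : s / δ + 1 ≤ t / δ := by
          rw [div_add' _ _ _ hδ.ne', div_le_div_iff_of_pos_right hδ]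
          linarith
        have := (Int.floor_le_floor h1).trans_eq' (Int.floor_add_one (s / δ))
        simp only at hst
        omega
      · have hgap := hsep x t s ht hs h
        have h1 : t / δ + 1 ≤ s / δ := by
          rw [div_add' _ _ _ hδ.ne', div_le_div_iff_of_pos_right hδ]
          linarith
        have := (Int.floor_le_floor h1).trans_eq' (Int.floor_add_one (t / δ))
        simp only at hst
        omega
    exact Set.countable_of_injective_of_countable_image hinj (Set.to_countable _)
  have hslice0 : ∀ x : X, (volume : Measure ℝ) {t : ℝ | φ.toFun t x ∈ A} = 0 :=
    fun x => (hslice x).measure_zero _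
  set ν := ((volume : Measure ℝ).restrict (Set.Icc (0 : ℝ) 1)).prod μ with hν_def
  have h1 : ν B = μ A := by
    rw [hν_def, Measure.prod_apply hB]
    have heq : ∀ t : ℝ, μ (Prod.mk t ⁻¹' B) = μ A := by
      intro t
      have hm : Continuous (φ.toFun t) := φ.continuous continuous_const continuous_id
      have hpre : Prod.mk t ⁻¹' B = φ.toFun t ⁻¹' A := rfl
      rw [hpre, ← Measure.map_apply hm.measurable hA, hinv t]
    simp only [heq]
    simp [Real.volume_Icc]
  have h2 : ν B = 0 := by
    rw [hν_def, Measure.prod_apply_symm hB]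
    have heq : ∀ x : X, ((volume : Measure ℝ).restrict (Set.Icc (0 : ℝ) 1))
        ((fun t : ℝ => (t, x)) ⁻¹' B) = 0 := by
      intro x
      exact le_antisymm ((Measure.restrict_apply_le _ _).trans (hslice0 x).le) zero_le
    simp only [heq]
    simp
  rw [h1] at h2
  exact h2

/-- For a continuous flow on a compact metric space with invariant Borel
probability measure `μ` and a closed set `S`, the set of points of `S` with positive
first return time to `S` has `μ`-measure zero. -/
theorem stmt_1 {X : Type*} [MetricSpace X] [CompactSpace X]
    [MeasurableSpace X] [BorelSpace X]
    (φ : Flow ℝ X) (μ : Measure X) [IsProbabilityMeasure μ]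
    (hinv : ∀ t : ℝ, μ.map (φ.toFun t) = μ)
    (S : Set X) (hS : IsClosed S) :
    μ {x | x ∈ S ∧ 0 < firstReturnTime φ S x} = 0 := by
  have hsub : {x | x ∈ S ∧ 0 < firstReturnTime φ S x} ⊆
      ⋃ n : ℕ, noReturnSet φ S (((n : ℝ) + 1)⁻¹) := by
    rintro x ⟨hxS, hx⟩
    obtain ⟨n, hn⟩ := ENNReal.exists_inv_nat_lt hx.ne'
    refine Set.mem_iUnion.2 ⟨n, hxS, ?_⟩
    intro t ht htn hts
    have h1 : firstReturnTime φ S x ≤ ENNReal.ofReal t := sInf_le ⟨t, ⟨ht, hts⟩, rfl⟩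
    have h2 : ENNReal.ofReal t ≤ (n : ENNReal)⁻¹ := by
      rcases Nat.eq_zero_or_pos n with h0 | hpos
      · simp [h0]
      · have hnR : (0 : ℝ) < (n : ℝ) := by exact_mod_cast hpos
        have ht' : t ≤ ((n : ℝ))⁻¹ := htn.trans (by
          rw [inv_le_inv₀ (by positivity) hnR]
          linarith)
        calc ENNReal.ofReal t ≤ ENNReal.ofReal (((n : ℝ))⁻¹) := ENNReal.ofReal_le_ofReal ht'
          _ = (ENNReal.ofReal (n : ℝ))⁻¹ := ENNReal.ofReal_inv_of_pos hnR
          _ = ((n : ENNReal))⁻¹ := by rw [ENNReal.ofReal_natCast]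
    exact absurd ((h1.trans h2).trans_lt hn) (lt_irrefl _)
  refine measure_mono_null hsub (measure_iUnion_null fun n => ?_)
  exact noReturnSet_null φ μ hinv S hS (by positivity)
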